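/- arXiv:0806.4471 — 2 statements merged into one kernel-verified Lean document; each statement's English description precedes it below -/
import Mathlib

section
/- Let m be a positive integer and N = 2·(2m+1). Then N has at least one representation as a sum of r ≥ 2 successive even positive numbers, and N has no representation as a sum of r ≥ 2 successive odd positive numbers. -/
lemma sum_succ_form (r a : ℕ) :
    ∑ i ∈ Finset.range r, (a + 2 * i) = r * a + r * (r - 1) := by
  have h2 : (∑ i ∈ Finset.range r, i) * 2 = r * (r - 1) := Finset.sum_range_id_mul_two r
  rw [Finset.sum_add_distrib, Finset.sum_const, Finset.card_range, ← Finset.mul_sum,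
    smul_eq_mul]
  omega

/-- Every number of the form 2·(2m+1), m ≥ 1, is a sum of r ≥ 2 successive even
positive numbers, and is never a sum of r ≥ 2 successive odd positive numbers. -/
theorem two_mul_odd_exclusively_even_sums (m : ℕ) (hm : 0 < m) :
    (∃ r a : ℕ, 2 ≤ r ∧ 0 < a ∧ Even a ∧
      2 * (2 * m + 1) = ∑ i ∈ Finset.range r, (a + 2 * i)) ∧
    ¬ ∃ r a : ℕ, 2 ≤ r ∧ 0 < a ∧ Odd a ∧
      2 * (2 * m + 1) = ∑ i ∈ Finset.range r, (a + 2 * i) := by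
  constructor
  · refine ⟨2, 2 * m, le_refl _, by omega, ⟨m, by ring⟩, ?_⟩
    rw [sum_succ_form]; ring
  · rintro ⟨r, a, hr, ha, ⟨k, hk⟩, hsum⟩
    rw [sum_succ_form] at hsum
    rcases Nat.even_or_odd r with ⟨s, hs⟩ | ⟨s, hs⟩
    · obtain ⟨p, rfl⟩ : ∃ p, s = p + 1 := ⟨s - 1, by omega⟩
      subst hk hs
      have h3 : p + 1 + (p + 1) - 1 = 2 * p + 1 := by omega
      rw [h3] at hsum
      have h4 : 2 * m + 1 = 2 * ((p + 1) * (k + p + 1)) := by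
        ring_nf at hsum ⊢; linarith
      omega
    · obtain ⟨p, rfl⟩ : ∃ p, s = p + 1 := ⟨s - 1, by omega⟩
      subst hk hs
      have h3 : 2 * (p + 1) + 1 - 1 = 2 * (p + 1) := by omega
      rw [h3] at hsum
      have h4 : 2 * (2 * m + 1) =
          2 * (2 * p * k + 3 * k + 2 * p ^ 2 + 6 * p + 4) + 1 := by
        ring_nf at hsum ⊢; linarith
      omega
end

section
/- Let n be a positive integer and p an odd prime with p > 2^n, and let N = 2^(n-1)·p. Then N has exactly one representation as a sum of r ≥ 2 consecutive positive integers, namely the sum of 2^n consecutive positive integers starting at (p+1)/2 - 2^(n-1): N = ∑_{i=0}^{2^n - 1} ((p+1)/2 - 2^(n-1) + i). In particular, the number of terms in this unique representation is even. -/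
lemma two_mul_sum_consec (r a : ℕ) :
    2 * ∑ i ∈ Finset.range r, (a + i) = r * (2 * a + r - 1) := by
  rw [Finset.sum_add_distrib, Finset.sum_const, Finset.card_range, smul_eq_mul]
  cases r with
  | zero => simp
  | succ k =>
    have h : (∑ i ∈ Finset.range (k + 1), i) * 2 = (k + 1) * k := by
      rw [Finset.sum_range_id_mul_two]; simp
    have h2 : 2 * a + (k + 1) - 1 = 2 * a + k := by omega
    rw [h2]; nlinarith [h]

/-- For n ≥ 1 and an odd prime p > 2^n, N = 2^(n-1)·p has exactly one
representation as a sum of r ≥ 2 consecutive positive integers, namely the sum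
of 2^n consecutive integers starting at (p+1)/2 - 2^(n-1); the number of
terms is even. -/
theorem large_prime_odd_part_unique_even_length_sum (n p : ℕ) (hn : 0 < n)
    (hp : p.Prime) (hodd : Odd p) (hgt : 2 ^ n < p) :
    0 < (p + 1) / 2 - 2 ^ (n - 1) ∧
    2 ^ (n - 1) * p = ∑ i ∈ Finset.range (2 ^ n), ((p + 1) / 2 - 2 ^ (n - 1) + i) ∧
    Even (2 ^ n) ∧
    (∀ r a : ℕ, 2 ≤ r → 0 < a →
      2 ^ (n - 1) * p = ∑ i ∈ Finset.range r, (a + i) →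
      r = 2 ^ n ∧ a = (p + 1) / 2 - 2 ^ (n - 1)) := by
  obtain ⟨k, hk⟩ := hodd
  have hn1 : 2 * 2 ^ (n - 1) = 2 ^ n := by
    have h : n - 1 + 1 = n := Nat.succ_pred_eq_of_pos hn
    rw [← pow_succ', h]
  refine ⟨by omega, ?_, ⟨2 ^ (n - 1), by omega⟩, ?_⟩
  · -- the representation
    have hs := two_mul_sum_consec (2 ^ n) ((p + 1) / 2 - 2 ^ (n - 1))
    have ha : 2 * ((p + 1) / 2 - 2 ^ (n - 1)) + 2 ^ n - 1 = p := by omega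
    rw [ha] at hs
    have h2 : 2 * (2 ^ (n - 1) * p) = 2 ^ n * p := by rw [← hn1]; ring
    omega
  · -- uniqueness
    intro r a hr ha heq
    have hs := two_mul_sum_consec r a
    have key : 2 ^ n * p = r * (2 * a + r - 1) := by
      rw [← hs, ← heq, ← hn1]; ring
    rcases Nat.even_or_odd r with hre | hro
    · -- r even, so s := 2a + r - 1 is odd, divides p, equals p
      have hsodd : Odd (2 * a + r - 1) := by
        obtain ⟨m, hm⟩ := hre
        exact ⟨a + m - 1, by omega⟩
      have hdvd : (2 * a + r - 1) ∣ 2 ^ n * p := ⟨r, by rw [key]; ring⟩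
      have hcop : Nat.Coprime (2 * a + r - 1) (2 ^ n) :=
        Nat.Coprime.pow_right _ (Odd.coprime_two_right (by assumption))
      have hdvp : (2 * a + r - 1) ∣ p := hcop.dvd_of_dvd_mul_left hdvd
      have := (Nat.Prime.eq_one_or_self_of_dvd hp _ hdvp)
      have hsp : 2 * a + r - 1 = p := by omega
      rw [hsp] at key
      have hr2 : r = 2 ^ n := by
        have := Nat.eq_of_mul_eq_mul_right hp.pos key.symm
        omega
      exact ⟨hr2, by omega⟩
    · -- r odd: r divides p, so r = p, contradiction
      have hdvd : r ∣ 2 ^ n * p := ⟨2 * a + r - 1, key⟩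
      have hcop : Nat.Coprime r (2 ^ n) :=
        Nat.Coprime.pow_right _ (Odd.coprime_two_right (by assumption))
      have hdvp : r ∣ p := hcop.dvd_of_dvd_mul_left hdvd
      have := (Nat.Prime.eq_one_or_self_of_dvd hp _ hdvp)
      have hrp : r = p := by omega
      rw [hrp] at key
      have h2 : 2 ^ n = 2 * a + p - 1 := by
        have hkey : p * 2 ^ n = p * (2 * a + p - 1) := by
          rw [mul_comm p (2 ^ n), key]
        exact Nat.eq_of_mul_eq_mul_left hp.pos hkey
      omega
end
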